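/- Let ι be a finite type, let V be a finite set of functions from ι to ℝ, and let B : ι → ℝ. Then B lies in the convex hull (over ℝ) of V if and only if there is no Dutch book against B, i.e., if and only if there is no stake function s : ι → ℝ such that ∑ i, s i * (v i − B i) < 0 for every v ∈ V. -/

import Mathlib

lemma clm_repr {ι : Type*} [Fintype ι] [DecidableEq ι] (f : (ι → ℝ) →L[ℝ] ℝ) (x : ι → ℝ) :
    f x = ∑ i, x i * f (Pi.single i 1) := by
  conv_lhs => rw [pi_eq_sum_univ x]
  rw [map_sum]
  refine Finset.sum_congr rfl fun i _ => ?_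
  have h1 : (fun j => if i = j then (1:ℝ) else 0) = Pi.single i 1 := by
    ext j; simp [Pi.single_apply, eq_comm]
  rw [map_smul, h1, smul_eq_mul]

theorem no_dutch_book_iff_convex_combination
    {ι : Type*} [Fintype ι] (V : Set (ι → ℝ)) (hV : V.Finite) (B : ι → ℝ) :
    B ∈ convexHull ℝ V ↔
      ¬ ∃ s : ι → ℝ, ∀ v ∈ V, (∑ i, s i * (v i - B i)) < 0 := by
  classical
  constructor
  · rintro hB ⟨s, hs⟩
    set L : (ι → ℝ) →ₗ[ℝ] ℝ :=
      { toFun := fun x => ∑ i, s i * x i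
        map_add' := by intro x y; simp [mul_add, Finset.sum_add_distrib]
        map_smul' := by
          intro c x
          simp [Finset.mul_sum, mul_left_comm] }
    have hC : Convex ℝ {x | L x < L B} :=
      convex_halfSpace_lt (LinearMap.isLinear L) (L B)
    have hVC : V ⊆ {x | L x < L B} := by
      intro v hv
      have := hs v hv
      have : L v - L B < 0 := by
        simpa [L, mul_sub, Finset.sum_sub_distrib] using this
      exact sub_neg.mp this
    have hB' : B ∈ {x | L x < L B} := convexHull_min hVC hC hB
    simp only [Set.mem_setOf_eq] at hB'
    exact lt_irrefl _ hB'
  · intro h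
    by_contra hB
    have hclosed : IsClosed (convexHull ℝ V) :=
      (hV.isCompact_convexHull (𝕜 := ℝ)).isClosed
    obtain ⟨f, u, hfB, hfV⟩ :=
      geometric_hahn_banach_point_closed (convex_convexHull ℝ V) hclosed hB
    refine h ⟨fun i => -(f (Pi.single i 1)), fun v hv => ?_⟩
    have hv' : u < f v := hfV v (subset_convexHull ℝ V hv)
    have : f v - f B = ∑ i, (v i - B i) * f (Pi.single i 1) := by
      rw [← map_sub, clm_repr]
      simp [Pi.sub_apply]
    have hpos : 0 < ∑ i, (v i - B i) * f (Pi.single i 1) := by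
      rw [← this]; linarith
    calc (∑ i, -(f (Pi.single i 1)) * (v i - B i))
        = -(∑ i, (v i - B i) * f (Pi.single i 1)) := by
          rw [← Finset.sum_neg_distrib]
          exact Finset.sum_congr rfl fun i _ => by ring
      _ < 0 := by linarith
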